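/- Let γ ≥ 0, η ∈ (−∞, −γ), K, L > 0, and let ζ : ℝ → ℝ be continuous. For f in the weighted space C_η((−∞,0];X₀) with norm ‖f‖_η = sup_{t≤0} e^{−ηt−∫_0^t ζ} ‖f(t)‖, define (Tf)(t) = ∫_t^0 e^{γ(s−t)+∫_s^t ζ(r)dr} K L ‖f(s)‖ ds for t ≤ 0. Then sup_{t≤0} e^{−ηt−∫_0^t ζ}·(Tf)(t) ≤ (KL/(−(γ+η))) ‖f‖_η. -/
import Mathlib


open MeasureTheory Set

/-- Center-part convolution estimate: for `γ ≥ 0`, `η < −γ`, if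
`‖f(t)‖ ≤ M e^{ηt + ∫_0^t ζ}` for all `t ≤ 0`, then for all `t ≤ 0`,
`e^{−ηt−∫_0^t ζ} ∫_t^0 e^{γ(s−t)+∫_s^t ζ} K L ‖f(s)‖ ds ≤ (KL/(−(γ+η))) M`. -/
theorem center_convolution_estimate
    {X₀ : Type*} [NormedAddCommGroup X₀] [NormedSpace ℝ X₀]
    (γ η K L M : ℝ) (hγ : 0 ≤ γ) (hη : η < -γ) (hK : 0 < K) (hL : 0 < L)
    (hM : 0 ≤ M)
    (ζ : ℝ → ℝ) (hζ : Continuous ζ)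
    (f : ℝ → X₀) (hf : ContinuousOn f (Iic (0:ℝ)))
    (hfb : ∀ t ≤ (0:ℝ), ‖f t‖ ≤ M * Real.exp (η * t + ∫ s in (0:ℝ)..t, ζ s)) :
    ∀ t ≤ (0:ℝ),
      Real.exp (-η * t - ∫ s in (0:ℝ)..t, ζ s) *
        (∫ s in t..(0:ℝ),
          Real.exp (γ * (s - t) + ∫ r in s..t, ζ r) * (K * L * ‖f s‖)) ≤
        K * L / (-(γ + η)) * M := by
  intro t ht
  obtain ⟨c, hc⟩ : ∃ c : ℝ, c = γ + η := ⟨_, rfl⟩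
  rw [← hc]
  have hcneg : c < 0 := by rw [hc]; linarith
  have hζint : ∀ a b : ℝ, IntervalIntegrable ζ volume a b := fun a b =>
    hζ.intervalIntegrable a b
  have hprim : Continuous fun s : ℝ => ∫ r in s..t, ζ r := by
    have h1 : Continuous fun s : ℝ => ∫ r in t..s, ζ r :=
      intervalIntegral.continuous_primitive hζint t
    have : (fun s : ℝ => ∫ r in s..t, ζ r) = fun s => -(∫ r in t..s, ζ r) := by
      funext s; rw [intervalIntegral.integral_symm]
    rw [this]; exact h1.neg
  -- continuity of LHS integrand on [t,0]
  have hcont : ContinuousOn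
      (fun s => Real.exp (γ * (s - t) + ∫ r in s..t, ζ r) * (K * L * ‖f s‖))
      (uIcc t 0) := by
    have huIcc : uIcc t (0:ℝ) = Icc t 0 := uIcc_of_le ht
    rw [huIcc]
    apply ContinuousOn.mul
    · exact ((continuous_const.mul (continuous_id.sub continuous_const)).add
        hprim).rexp.continuousOn
    · exact continuousOn_const.mul
        ((hf.mono (fun x hx => hx.2)).norm)
  have hint1 : IntervalIntegrable
      (fun s => Real.exp (γ * (s - t) + ∫ r in s..t, ζ r) * (K * L * ‖f s‖))
      volume t 0 := hcont.intervalIntegrable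
  set C : ℝ := K * L * M * Real.exp (η * t + ∫ r in (0:ℝ)..t, ζ r) with hC
  have hint2 : IntervalIntegrable (fun s => C * Real.exp (c * (s - t))) volume t 0 :=
    (continuous_const.mul ((continuous_const.mul
      (continuous_id.sub continuous_const)).rexp)).intervalIntegrable t 0
  have hmono : (∫ s in t..(0:ℝ),
      Real.exp (γ * (s - t) + ∫ r in s..t, ζ r) * (K * L * ‖f s‖)) ≤
      ∫ s in t..(0:ℝ), C * Real.exp (c * (s - t)) := by
    apply intervalIntegral.integral_mono_on ht hint1 hint2
    intro s hs
    have hs0 : s ≤ 0 := hs.2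
    have hsplit : (∫ r in (0:ℝ)..s, ζ r) + (∫ r in s..t, ζ r)
        = ∫ r in (0:ℝ)..t, ζ r :=
      intervalIntegral.integral_add_adjacent_intervals (hζint 0 s) (hζint s t)
    calc Real.exp (γ * (s - t) + ∫ r in s..t, ζ r) * (K * L * ‖f s‖)
        ≤ Real.exp (γ * (s - t) + ∫ r in s..t, ζ r) *
          (K * L * (M * Real.exp (η * s + ∫ r in (0:ℝ)..s, ζ r))) := by
          apply mul_le_mul_of_nonneg_left _ (Real.exp_nonneg _)
          exact mul_le_mul_of_nonneg_left (hfb s hs0)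
            (le_of_lt (mul_pos hK hL))
      _ = K * L * M * Real.exp ((γ * (s - t) + ∫ r in s..t, ζ r) +
            (η * s + ∫ r in (0:ℝ)..s, ζ r)) := by
          simp only [Real.exp_add]; ring
      _ = C * Real.exp (c * (s - t)) := by
          have hexp : (γ * (s - t) + ∫ r in s..t, ζ r) +
              (η * s + ∫ r in (0:ℝ)..s, ζ r)
              = (η * t + ∫ r in (0:ℝ)..t, ζ r) + c * (s - t) := by
            rw [← hsplit, hc]; ring
          rw [hexp, Real.exp_add, hC]; ring
  have hval : (∫ s in t..(0:ℝ), Real.exp (c * (s - t)))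
      = (Real.exp (-(c * t)) - 1) / c := by
    rw [intervalIntegral.integral_comp_sub_right (fun u => Real.exp (c * u)) t,
      intervalIntegral.integral_comp_mul_left (fun u => Real.exp u) (ne_of_lt hcneg)]
    rw [integral_exp]
    rw [show t - t = (0:ℝ) by ring, mul_zero, show c * ((0:ℝ) - t) = -(c*t) by ring]
    rw [Real.exp_zero, smul_eq_mul]
    field_simp
  have hJ : (Real.exp (-(c * t)) - 1) / c ≤ 1 / (-c) := by
    have hct : 0 ≤ c * t := by nlinarith
    have h1 : Real.exp (-(c * t)) ≤ 1 := by rw [Real.exp_le_one_iff]; linarith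
    have hpos : (0:ℝ) < -c := by linarith
    calc (Real.exp (-(c * t)) - 1) / c
        = (1 - Real.exp (-(c * t))) / (-c) := by
          rw [div_neg, ← neg_div, neg_sub]
      _ ≤ 1 / (-c) := by
          rw [div_le_div_iff_of_pos_right hpos]; linarith [Real.exp_nonneg (-(c * t))]
  have hintval : (∫ s in t..(0:ℝ), C * Real.exp (c * (s - t)))
      = C * ((Real.exp (-(c * t)) - 1) / c) := by
    rw [intervalIntegral.integral_const_mul, hval]
  have hCpos : 0 ≤ C := by
    positivity
  have key : (∫ s in t..(0:ℝ),
      Real.exp (γ * (s - t) + ∫ r in s..t, ζ r) * (K * L * ‖f s‖)) ≤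
      C * (1 / (-c)) := by
    calc _ ≤ ∫ s in t..(0:ℝ), C * Real.exp (c * (s - t)) := hmono
      _ = C * ((Real.exp (-(c * t)) - 1) / c) := hintval
      _ ≤ C * (1 / (-c)) := mul_le_mul_of_nonneg_left hJ hCpos
  have hEpos : (0:ℝ) < Real.exp (-η * t - ∫ s in (0:ℝ)..t, ζ s) := Real.exp_pos _
  calc Real.exp (-η * t - ∫ s in (0:ℝ)..t, ζ s) *
        (∫ s in t..(0:ℝ),
          Real.exp (γ * (s - t) + ∫ r in s..t, ζ r) * (K * L * ‖f s‖))
      ≤ Real.exp (-η * t - ∫ s in (0:ℝ)..t, ζ s) * (C * (1 / (-c))) :=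
        mul_le_mul_of_nonneg_left key (le_of_lt hEpos)
    _ = K * L / (-c) * M := by
        rw [hC, show Real.exp (-η * t - ∫ s in (0:ℝ)..t, ζ s) *
          (K * L * M * Real.exp (η * t + ∫ r in (0:ℝ)..t, ζ r) * (1 / -c)) =
          K * L * M * (1 / -c) * (Real.exp (-η * t - ∫ s in (0:ℝ)..t, ζ s) *
            Real.exp (η * t + ∫ r in (0:ℝ)..t, ζ r)) by ring, ← Real.exp_add]
        rw [show -η * t - (∫ s in (0:ℝ)..t, ζ s) +
            (η * t + ∫ r in (0:ℝ)..t, ζ r) = 0 by ring, Real.exp_zero]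
        ring
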